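/- Among all trees on n ≥ 2 vertices, the star K_{1,n-1} uniquely minimizes the Wiener index, with value (n-1)^2. -/

import Mathlib

/-- The Wiener index of a finite graph. -/
noncomputable def wiener {V : Type*} [Fintype V] (G : SimpleGraph V) : ℕ :=
  (∑ u : V, ∑ v : V, G.dist u v) / 2

/-- The star `K_{1,n-1}` on `Fin n`, with center `0`. -/
def starGraph (n : ℕ) [NeZero n] : SimpleGraph (Fin n) where
  Adj u v := u ≠ v ∧ (u = 0 ∨ v = 0)
  symm := ⟨fun u v ⟨h1, h2⟩ => ⟨h1.symm, h2.symm⟩⟩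
  loopless := ⟨fun u ⟨h, _⟩ => h rfl⟩

open Finset
open SimpleGraph hiding starGraph starGraph_adj

open scoped Classical in
noncomputable def fdist {n : ℕ} (G : SimpleGraph (Fin n)) (u v : Fin n) : ℕ :=
  if u = v then 0 else if G.Adj u v then 1 else 2

lemma fdist_comm {n : ℕ} (G : SimpleGraph (Fin n)) (u v : Fin n) :
    fdist G u v = fdist G v u := by
  unfold fdist
  by_cases h : u = v
  · simp [h]
  · simp only [if_neg h, if_neg (Ne.symm h)]
    rw [G.adj_comm]

lemma sum_ite_fin {n : ℕ} [NeZero n] (c : Fin n) (a b : ℕ) :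
    ∑ v : Fin n, (if v = c then a else b) = a + (n - 1) * b := by
  rw [← Finset.add_sum_erase _ _ (Finset.mem_univ c)]
  simp only [if_pos rfl]
  congr 1
  rw [Finset.sum_congr rfl (fun x hx => if_neg (Finset.ne_of_mem_erase hx)),
      Finset.sum_const, Finset.card_erase_of_mem (Finset.mem_univ c)]
  simp [Fintype.card_fin, mul_comm]

lemma fdist_le_dist {n : ℕ} (G : SimpleGraph (Fin n)) (hc : G.Connected)
    (u v : Fin n) : fdist G u v ≤ G.dist u v := by
  unfold fdist
  by_cases h : u = v
  · simp [h]
  · simp only [if_neg h]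
    have h0 : G.dist u v ≠ 0 := Nat.pos_iff_ne_zero.mp (hc.pos_dist_of_ne h)
    by_cases ha : G.Adj u v
    · simp [ha]; omega
    · simp only [if_neg ha]
      have h1 : G.dist u v ≠ 1 := fun h1 => ha (SimpleGraph.dist_eq_one_iff_adj.mp h1)
      omega

lemma row_sum_fdist {n : ℕ} [NeZero n] (G : SimpleGraph (Fin n)) [DecidableRel G.Adj] (u : Fin n) :
    ∑ v : Fin n, fdist G u v + G.degree u = 2 * (n - 1) := by
  classical
  have key : ∀ v, fdist G u v + (if G.Adj u v then 1 else 0) = (if v = u then 0 else 2) := by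
    intro v
    unfold fdist
    by_cases h : u = v
    · simp [h, G.irrefl]
    · simp only [if_neg h, if_neg (Ne.symm h)]
      by_cases ha : G.Adj u v <;> simp [ha]
  have hdeg : G.degree u = ∑ v : Fin n, (if G.Adj u v then 1 else 0) := by
    rw [Finset.sum_boole]
    rw [SimpleGraph.degree, neighborFinset_eq_filter]
    simp
  rw [hdeg, ← Finset.sum_add_distrib]
  rw [Finset.sum_congr rfl (fun v _ => key v), sum_ite_fin]
  ring
open Finset
open SimpleGraph hiding starGraph starGraph_adj

section star
variable {n : ℕ} [NeZero n]

lemma starGraph_adj (u v : Fin n) : (starGraph n).Adj u v ↔ u ≠ v ∧ (u = 0 ∨ v = 0) := Iff.rfl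

lemma starGraph_connected : (starGraph n).Connected := by
  rw [connected_iff]
  refine ⟨fun u v => ?_, ⟨0⟩⟩
  by_cases h : u = v
  · exact h ▸ Reachable.refl u
  by_cases hu : u = 0
  · exact (Adj.reachable ⟨h, Or.inl hu⟩)
  by_cases hv : v = 0
  · exact (Adj.reachable ⟨h, Or.inr hv⟩)
  · exact (Adj.reachable (show (starGraph n).Adj u 0 from ⟨hu, Or.inr rfl⟩)).trans
      (Adj.reachable (show (starGraph n).Adj 0 v from ⟨Ne.symm hv, Or.inl rfl⟩))

lemma starGraph_dist (u v : Fin n) : (starGraph n).dist u v = fdist (starGraph n) u v := by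
  unfold fdist
  by_cases h : u = v
  · simp [h]
  simp only [if_neg h]
  by_cases ha : (starGraph n).Adj u v
  · simp [ha, SimpleGraph.dist_eq_one_iff_adj.mpr ha]
  simp only [if_neg ha]
  have hu : u ≠ 0 := fun hu => ha ⟨h, Or.inl hu⟩
  have hv : v ≠ 0 := fun hv => ha ⟨h, Or.inr hv⟩
  have hle : (starGraph n).dist u v ≤ 2 := by
    simpa using SimpleGraph.dist_le (Walk.cons (show (starGraph n).Adj u 0 from ⟨hu, Or.inr rfl⟩)
      (Walk.cons (show (starGraph n).Adj 0 v from ⟨Ne.symm hv, Or.inl rfl⟩) Walk.nil))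
  have h0 : (starGraph n).dist u v ≠ 0 :=
    Nat.pos_iff_ne_zero.mp (starGraph_connected.pos_dist_of_ne h)
  have h1 : (starGraph n).dist u v ≠ 1 := fun h1 => ha (SimpleGraph.dist_eq_one_iff_adj.mp h1)
  omega

end star
open Finset
open SimpleGraph hiding starGraph starGraph_adj

section sums
variable {n : ℕ} [NeZero n]

instance starAdjDec : DecidableRel (starGraph n).Adj :=
  fun u v => decidable_of_iff _ (starGraph_adj u v).symm

lemma degree_eq_sum (G : SimpleGraph (Fin n)) [DecidableRel G.Adj] (u : Fin n) :
    G.degree u = ∑ v : Fin n, (if G.Adj u v then 1 else 0) := by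
  rw [Finset.sum_boole, SimpleGraph.degree, neighborFinset_eq_filter]
  simp

lemma sum_fdist_of_degsum (hn : 2 ≤ n) (G : SimpleGraph (Fin n)) [DecidableRel G.Adj]
    (h : ∑ u : Fin n, G.degree u = 2 * (n - 1)) :
    ∑ u : Fin n, ∑ v : Fin n, fdist G u v = 2 * (n - 1) ^ 2 := by
  have htot : ∑ u : Fin n, ∑ v : Fin n, fdist G u v + ∑ u : Fin n, G.degree u
      = n * (2 * (n - 1)) := by
    rw [← Finset.sum_add_distrib]
    rw [Finset.sum_congr rfl (fun u _ => row_sum_fdist G u)]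
    simp [Finset.card_univ, mul_comm]
  rw [h] at htot
  obtain ⟨m, rfl⟩ : ∃ m, n = m + 2 := ⟨n - 2, by omega⟩
  have h1 : m + 2 - 1 = m + 1 := by omega
  rw [h1] at htot ⊢
  have h2 : (m + 2) * (2 * (m + 1)) = 2 * (m + 1) ^ 2 + 2 * (m + 1) := by ring
  omega

lemma tree_degsum (G : SimpleGraph (Fin n)) [DecidableRel G.Adj] (hT : G.IsTree) :
    ∑ u : Fin n, G.degree u = 2 * (n - 1) := by
  classical
  rw [SimpleGraph.sum_degrees_eq_twice_card_edges]
  have := hT.card_edgeFinset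
  rw [Fintype.card_fin] at this
  omega

lemma star_degsum : ∑ u : Fin n, ∑ v : Fin n, (if (starGraph n).Adj u v then 1 else 0) = 2 * (n - 1) := by
  have hrow : ∀ u : Fin n, ∑ v : Fin n, (if (starGraph n).Adj u v then 1 else 0)
      = if u = 0 then n - 1 else 1 := by
    intro u
    by_cases hu : u = 0
    · subst hu
      rw [Finset.sum_congr rfl (fun v _ => show (if (starGraph n).Adj 0 v then 1 else 0)
          = if v = (0 : Fin n) then 0 else 1 by
        by_cases hv : v = 0 <;> simp [hv, starGraph_adj, Ne.symm])]
      rw [sum_ite_fin]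
      simp
    · rw [Finset.sum_congr rfl (fun v _ => show (if (starGraph n).Adj u v then 1 else 0)
          = if v = (0 : Fin n) then 1 else 0 by
        by_cases hv : v = 0
        · simp [hv, starGraph_adj, hu]
        · simp only [if_neg hv, ite_eq_right_iff]
          intro ha
          exact absurd (ha.2.resolve_left hu) hv)]
      rw [sum_ite_fin, if_neg hu]
      simp
  rw [Finset.sum_congr rfl (fun u _ => hrow u), sum_ite_fin]
  omega

lemma star_sum_dist (hn : 2 ≤ n) :
    ∑ u : Fin n, ∑ v : Fin n, (starGraph n).dist u v = 2 * (n - 1) ^ 2 := by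
  classical
  rw [Finset.sum_congr rfl (fun u _ => Finset.sum_congr rfl (fun v _ => starGraph_dist u v))]
  refine sum_fdist_of_degsum hn _ ?_
  rw [Finset.sum_congr rfl (fun u _ => degree_eq_sum _ u)]
  exact star_degsum

end sums
open Finset
open SimpleGraph hiding starGraph starGraph_adj

section center
variable {n : ℕ} {G : SimpleGraph (Fin n)}

lemma exists_mid (hc : G.Connected) {u v : Fin n} (h : G.dist u v = 2) :
    ∃ w, G.Adj u w ∧ G.Adj w v := by
  obtain ⟨p, hp⟩ := (hc.preconnected u v).exists_walk_length_eq_dist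
  rw [h] at hp
  cases p with
  | nil => simp at hp
  | cons ha q =>
    cases q with
    | nil => simp at hp
    | cons hb r =>
      cases r with
      | nil => exact ⟨_, ha, hb⟩
      | cons hc' r' => simp [SimpleGraph.Walk.length_cons] at hp

lemma path_eq_of_tree (hT : G.IsTree) {x y : Fin n} (p q : G.Walk x y)
    (hp : p.IsPath) (hq : q.IsPath) : p = q := by
  have := isAcyclic_iff_path_unique.mp hT.IsAcyclic (⟨p, hp⟩ : G.Path x y) ⟨q, hq⟩
  exact congrArg Subtype.val this

lemma no_triangle (hT : G.IsTree) {a b m : Fin n}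
    (hab : G.Adj a b) (ham : G.Adj a m) (hmb : G.Adj m b) : False := by
  have h1 : (Walk.cons hab Walk.nil : G.Walk a b).IsPath := by
    simp [Walk.cons_isPath_iff, hab.ne]
  have h2 : (Walk.cons ham (Walk.cons hmb Walk.nil) : G.Walk a b).IsPath := by
    simp [Walk.cons_isPath_iff, hab.ne, ham.ne, hmb.ne]
  have hl := congrArg Walk.length (path_eq_of_tree hT _ _ h1 h2)
  simp at hl

lemma exists_center (hn : 2 ≤ n) (hT : G.IsTree)
    (hd2 : ∀ u v : Fin n, u ≠ v → ¬G.Adj u v → G.dist u v = 2) :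
    ∃ c : Fin n, ∀ v, v ≠ c → G.Adj v c := by
  have hc := hT.isConnected
  -- there is an edge
  obtain ⟨a, b, hab⟩ : ∃ a b : Fin n, G.Adj a b := by
    obtain ⟨x, y, hne⟩ := Fintype.exists_pair_of_one_lt_card
      (α := Fin n) (by simp; omega)
    by_cases h : G.Adj x y
    · exact ⟨x, y, h⟩
    · obtain ⟨m, h1, _⟩ := exists_mid hc (hd2 x y hne h)
      exact ⟨x, m, h1⟩
  -- every other vertex is adjacent to a or b
  have hcov : ∀ v, v ≠ a → v ≠ b → (G.Adj v a ∨ G.Adj v b) := by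
    intro v hva hvb
    by_contra hcon
    push_neg at hcon
    obtain ⟨hna, hnb⟩ := hcon
    obtain ⟨m, hvm, hma⟩ := exists_mid hc (hd2 v a hva hna)
    obtain ⟨m', hvm', hm'b⟩ := exists_mid hc (hd2 v b hvb hnb)
    have hmb : m ≠ b := fun h => hnb (h ▸ hvm)
    by_cases hmm : m = m'
    · exact no_triangle hT hab hma.symm (hmm ▸ hm'b)
    · have h1 : (Walk.cons hvm (Walk.cons hma (Walk.cons hab Walk.nil)) : G.Walk v b).IsPath := by
        simp [Walk.cons_isPath_iff, hvm.ne, hma.ne, hab.ne, hva, hvb, hmb]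
      have h2 : (Walk.cons hvm' (Walk.cons hm'b Walk.nil) : G.Walk v b).IsPath := by
        simp [Walk.cons_isPath_iff, hvm'.ne, hm'b.ne, hvb]
      have hl := congrArg Walk.length (path_eq_of_tree hT _ _ h1 h2)
      simp at hl
  by_cases hA : ∀ v, v ≠ a → v ≠ b → G.Adj v a
  · exact ⟨a, fun v hva => by
      by_cases hvb : v = b
      · exact hvb ▸ hab.symm
      · exact hA v hva hvb⟩
  by_cases hB : ∀ v, v ≠ a → v ≠ b → G.Adj v b
  · exact ⟨b, fun v hvb => by
      by_cases hva : v = a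
      · exact hva ▸ hab
      · exact hB v hva hvb⟩
  -- contradiction
  exfalso
  push_neg at hA hB
  obtain ⟨v, hva, hvb, hna⟩ := hA
  obtain ⟨w, hwa, hwb, hnb⟩ := hB
  have hvB : G.Adj v b := (hcov v hva hvb).resolve_left hna
  have hwA : G.Adj w a := (hcov w hwa hwb).resolve_right hnb
  have hvw : v ≠ w := fun h => hna (h ▸ hwA)
  by_cases hadj : G.Adj v w
  · have h1 : (Walk.cons hab (Walk.cons hvB.symm Walk.nil) : G.Walk a v).IsPath := by
      simp [Walk.cons_isPath_iff, hab.ne, hvB.ne, Ne.symm hva, Ne.symm hvb]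
    have h2 : (Walk.cons hwA.symm (Walk.cons hadj.symm Walk.nil) : G.Walk a v).IsPath := by
      simp [Walk.cons_isPath_iff, hwA.ne, hadj.ne, Ne.symm hva, Ne.symm hvw, Ne.symm hwa]
    have hs := congrArg Walk.support (path_eq_of_tree hT _ _ h1 h2)
    simp only [Walk.support_cons, Walk.support_nil, List.cons.injEq, and_true, true_and] at hs
    exact hwb hs.symm
  · obtain ⟨m, hvm, hmw⟩ := exists_mid hc (hd2 v w hvw hadj)
    have hma : m ≠ a := fun h => hna (h ▸ hvm)
    have hmb : m ≠ b := fun h => hnb ((h ▸ hmw).symm)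
    have h1 : (Walk.cons hvm (Walk.cons hmw Walk.nil) : G.Walk v w).IsPath := by
      simp [Walk.cons_isPath_iff, hvm.ne, hmw.ne, hvw]
    have h2 : (Walk.cons hvB (Walk.cons hab.symm (Walk.cons hwA.symm Walk.nil)) : G.Walk v w).IsPath := by
      simp [Walk.cons_isPath_iff, hvB.ne, hab.ne, hwA.ne, hvw, hva, Ne.symm hwb, Ne.symm hwa, hab.ne']
    have hl := congrArg Walk.length (path_eq_of_tree hT _ _ h1 h2)
    simp at hl

end center
open Finset
open SimpleGraph hiding starGraph starGraph_adj

lemma star_iso_of_center {n : ℕ} [NeZero n] {G : SimpleGraph (Fin n)} (hT : G.IsTree)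
    (c : Fin n) (hcen : ∀ v, v ≠ c → G.Adj v c) : Nonempty (G ≃g starGraph n) := by
  have hchar : ∀ u v : Fin n, G.Adj u v ↔ (u ≠ v ∧ (u = c ∨ v = c)) := by
    intro u v
    constructor
    · intro h
      refine ⟨h.ne, ?_⟩
      by_contra hcon
      push_neg at hcon
      exact no_triangle hT h (hcen u hcon.1) (hcen v hcon.2).symm
    · rintro ⟨hne, h | h⟩
      · subst h; exact (hcen v (Ne.symm hne)).symm
      · subst h; exact hcen u hne
  refine ⟨⟨Equiv.swap c 0, @fun u v => ?_⟩⟩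
  show (Equiv.swap c 0 u ≠ Equiv.swap c 0 v ∧ (Equiv.swap c 0 u = 0 ∨ Equiv.swap c 0 v = 0))
      ↔ G.Adj u v
  rw [hchar u v]
  have key : ∀ x : Fin n, Equiv.swap c 0 x = 0 ↔ x = c := by
    intro x
    constructor
    · intro h
      have := congrArg (Equiv.swap c 0) h
      simpa using this
    · intro h; simp [h]
  simp only [key, ne_eq, (Equiv.swap c 0).injective.eq_iff]
open Finset
open SimpleGraph hiding starGraph starGraph_adj

/-- Among all trees on `n ≥ 2` vertices, the star `K_{1,n-1}` uniquely
minimizes the Wiener index, with value `(n-1)²`. -/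
theorem star_unique_min_wiener (n : ℕ) (hn : 2 ≤ n) [NeZero n]
    (T : SimpleGraph (Fin n)) (hT : T.IsTree) :
    wiener (starGraph n) = (n - 1) ^ 2 ∧
    wiener (starGraph n) ≤ wiener T ∧
    (wiener T = wiener (starGraph n) → Nonempty (T ≃g starGraph n)) := by
  classical
  have hled : ∀ u v : Fin n, fdist T u v ≤ T.dist u v := fdist_le_dist T hT.isConnected
  have hsumf : ∑ u : Fin n, ∑ v : Fin n, fdist T u v = 2 * (n - 1) ^ 2 :=
    sum_fdist_of_degsum hn T (tree_degsum T hT)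
  have hstar : wiener (starGraph n) = (n - 1) ^ 2 := by
    show (∑ u : Fin n, ∑ v : Fin n, (starGraph n).dist u v) / 2 = (n - 1) ^ 2
    rw [star_sum_dist hn]
    omega
  have hineq : wiener (starGraph n) ≤ wiener T := by
    rw [hstar]
    show (n - 1) ^ 2 ≤ (∑ u : Fin n, ∑ v : Fin n, T.dist u v) / 2
    have hle : 2 * (n - 1) ^ 2 ≤ ∑ u : Fin n, ∑ v : Fin n, T.dist u v := by
      rw [← hsumf]
      exact Finset.sum_le_sum fun u _ => Finset.sum_le_sum fun v _ => hled u v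
    omega
  refine ⟨hstar, hineq, fun heq => ?_⟩
  have hall : ∀ u v : Fin n, T.dist u v = fdist T u v := by
    by_contra hcon
    push_neg at hcon
    obtain ⟨u, v, hne⟩ := hcon
    have hlt : fdist T u v < T.dist u v := lt_of_le_of_ne (hled u v) (Ne.symm hne)
    have huv : u ≠ v := by
      rintro rfl
      rw [SimpleGraph.dist_self] at hlt
      omega
    have hlt2 : fdist T v u < T.dist v u := by
      rw [fdist_comm T v u,
        show T.dist v u = T.dist u v from SimpleGraph.dist_comm]
      exact hlt
    have key : 2 * (n - 1) ^ 2 + 2 ≤ ∑ u : Fin n, ∑ v : Fin n, T.dist u v := by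
      have h2 : 2 ≤ ∑ x : Fin n, ∑ y : Fin n, (T.dist x y - fdist T x y) := by
        rw [← Finset.sum_product']
        have hsub : ({(u, v), (v, u)} : Finset (Fin n × Fin n)) ⊆ Finset.univ ×ˢ Finset.univ := by
          intro p _
          simp [Finset.mem_product]
        calc 2 ≤ ∑ p ∈ ({(u, v), (v, u)} : Finset (Fin n × Fin n)),
                (T.dist p.1 p.2 - fdist T p.1 p.2) := by
              rw [Finset.sum_pair (by simp [huv] : ((u, v) : Fin n × Fin n) ≠ (v, u))]
              dsimp only
              omega
          _ ≤ _ := Finset.sum_le_sum_of_subset hsub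
      have hsplit : ∑ x : Fin n, ∑ y : Fin n, T.dist x y
          = ∑ x : Fin n, ∑ y : Fin n, fdist T x y
            + ∑ x : Fin n, ∑ y : Fin n, (T.dist x y - fdist T x y) := by
        rw [← Finset.sum_add_distrib]
        refine Finset.sum_congr rfl fun x _ => ?_
        rw [← Finset.sum_add_distrib]
        exact Finset.sum_congr rfl fun y _ => (Nat.add_sub_cancel' (hled x y)).symm
      omega
    have : (n - 1) ^ 2 + 1 ≤ wiener T := by
      show (n - 1) ^ 2 + 1 ≤ (∑ u : Fin n, ∑ v : Fin n, T.dist u v) / 2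
      omega
    rw [heq, hstar] at this
    omega
  have hd2 : ∀ u v : Fin n, u ≠ v → ¬T.Adj u v → T.dist u v = 2 := by
    intro u v h hna
    rw [hall u v]
    unfold fdist
    simp [h, hna]
  obtain ⟨c, hcen⟩ := exists_center hn hT hd2
  exact star_iso_of_center hT c hcen
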